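/- Let w₁, w₂ be scalar weights on (x₀,x₁), let a₁, a₂ ∈ ℝ∖{0}, and let W(x) be the 3×3 matrix with entries W₁₁ = a₁²x²w₂(x) + w₁(x), W₁₂ = W₂₁ = a₁xw₂(x), W₁₃ = W₃₁ = a₁a₂x²w₂(x), W₂₂ = w₂(x), W₂₃ = W₃₂ = a₂xw₂(x), W₃₃ = a₂²x²w₂(x) + w₁(x) (this is the weight of the setup with w₃ = w₁). Set s = a₁² + a₂² and M = [[1, 0, −a₁/a₂], [0, 1, 0], [a₁a₂/s, 0, a₂²/s]]. Then M is invertible and for every x: M·W(x)·Mᵀ = [[(s/a₂²)·w₁(x), 0, 0], [0, w₂(x), a₂xw₂(x)], [0, a₂xw₂(x), a₂²x²w₂(x) + (a₂²/s)·w₁(x)]]. In particular W reduces to the direct sum of the scalar weight (s/a₂²)·w₁ and a 2×2 weight matrix. -/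

import Mathlib

open MeasureTheory Matrix

noncomputable section

/-- The 3×3 weight matrix of the setup with `w₃ = w₁`. -/
def W3' (w₁ w₂ : ℝ → ℝ) (a₁ a₂ : ℝ) (x : ℝ) : Matrix (Fin 3) (Fin 3) ℝ :=
  !![a₁ ^ 2 * x ^ 2 * w₂ x + w₁ x, a₁ * x * w₂ x, a₁ * a₂ * x ^ 2 * w₂ x;
     a₁ * x * w₂ x, w₂ x, a₂ * x * w₂ x;
     a₁ * a₂ * x ^ 2 * w₂ x, a₂ * x * w₂ x, a₂ ^ 2 * x ^ 2 * w₂ x + w₁ x]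

/-- The reducing matrix `M` (with `s = a₁² + a₂²`). -/
def M3 (a₁ a₂ : ℝ) : Matrix (Fin 3) (Fin 3) ℝ :=
  !![1, 0, -(a₁ / a₂);
     0, 1, 0;
     a₁ * a₂ / (a₁ ^ 2 + a₂ ^ 2), 0, a₂ ^ 2 / (a₁ ^ 2 + a₂ ^ 2)]

set_option maxHeartbeats 2000000 in
lemma W3'_mul_aux (w₁ w₂ : ℝ → ℝ) (a₁ a₂ : ℝ) (ha₁ : a₁ ≠ 0) (ha₂ : a₂ ≠ 0) (x : ℝ) :
    M3 a₁ a₂ * W3' w₁ w₂ a₁ a₂ x * (M3 a₁ a₂)ᵀ =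
      !![((a₁ ^ 2 + a₂ ^ 2) / a₂ ^ 2) * w₁ x, 0, 0;
         0, w₂ x, a₂ * x * w₂ x;
         0, a₂ * x * w₂ x,
           a₂ ^ 2 * x ^ 2 * w₂ x + (a₂ ^ 2 / (a₁ ^ 2 + a₂ ^ 2)) * w₁ x] := by
  have hs : a₁ ^ 2 + a₂ ^ 2 ≠ 0 := by positivity
  rw [M3, W3', show ((!![1, 0, -(a₁ / a₂); 0, 1, 0;
      a₁ * a₂ / (a₁ ^ 2 + a₂ ^ 2), 0, a₂ ^ 2 / (a₁ ^ 2 + a₂ ^ 2)] :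
      Matrix (Fin 3) (Fin 3) ℝ))ᵀ = !![1, 0, a₁ * a₂ / (a₁ ^ 2 + a₂ ^ 2); 0, 1, 0;
      -(a₁ / a₂), 0, a₂ ^ 2 / (a₁ ^ 2 + a₂ ^ 2)] by
    ext i j; fin_cases i <;> fin_cases j <;> rfl,
    Matrix.mul_fin_three, Matrix.mul_fin_three]
  ext i j
  fin_cases i <;> fin_cases j <;>
    simp only [Matrix.cons_val', Matrix.cons_val_zero, Matrix.cons_val_one,
      Matrix.head_cons, Matrix.cons_val_two, Matrix.tail_cons, Matrix.empty_val',
      Matrix.cons_val_fin_one, Matrix.of_apply, Fin.isValue, Fin.mk_one, Fin.zero_eta,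
      Matrix.head_fin_const, Fin.reduceFinMk] <;>
    field_simp <;> ring

/-- If `w₃ = w₁`, then the 3×3 weight of the setup reduces: the explicit invertible
matrix `M` satisfies `M W(x) Mᵀ = ((s/a₂²) w₁(x)) ⊕ (2×2 block)` for every `x`,
where `s = a₁² + a₂²`. -/
theorem W3'_reduces
    (x₀ x₁ : ℝ) (w₁ w₂ : ℝ → ℝ) (a₁ a₂ : ℝ) (ha₁ : a₁ ≠ 0) (ha₂ : a₂ ≠ 0)
    (hmeas₁ : Measurable w₁) (hmeas₂ : Measurable w₂)
    (hpos₁ : ∀ᵐ x ∂volume, x ∈ Set.Ioo x₀ x₁ → 0 < w₁ x)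
    (hpos₂ : ∀ᵐ x ∂volume, x ∈ Set.Ioo x₀ x₁ → 0 < w₂ x)
    (hsupp₁ : ∀ x ∉ Set.Ioo x₀ x₁, w₁ x = 0)
    (hsupp₂ : ∀ x ∉ Set.Ioo x₀ x₁, w₂ x = 0)
    (hmom₁ : ∀ n : ℕ, Integrable (fun x => |x| ^ n * w₁ x))
    (hmom₂ : ∀ n : ℕ, Integrable (fun x => |x| ^ n * w₂ x)) :
    IsUnit (M3 a₁ a₂) ∧
    ∀ x : ℝ,
      M3 a₁ a₂ * W3' w₁ w₂ a₁ a₂ x * (M3 a₁ a₂)ᵀ =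
        !![((a₁ ^ 2 + a₂ ^ 2) / a₂ ^ 2) * w₁ x, 0, 0;
           0, w₂ x, a₂ * x * w₂ x;
           0, a₂ * x * w₂ x,
             a₂ ^ 2 * x ^ 2 * w₂ x + (a₂ ^ 2 / (a₁ ^ 2 + a₂ ^ 2)) * w₁ x] := by
  constructor
  · rw [Matrix.isUnit_iff_isUnit_det]
    have hs : a₁ ^ 2 + a₂ ^ 2 ≠ 0 := by positivity
    have : (M3 a₁ a₂).det = 1 := by
      simp [M3, Matrix.det_fin_three]
      field_simp
      ring
    rw [this]; exact isUnit_one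
  · exact fun x => W3'_mul_aux w₁ w₂ a₁ a₂ ha₁ ha₂ x

end
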